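/- arXiv:2005.07361 — 4 statements merged into one kernel-verified Lean document; each statement's English description precedes it below -/
import Mathlib

section
/- Let 0 ≤ s < r < 1, u₀ = s/r, λ ∈ closure(𝔻), v₀ = λ, and define f(z) = z · T_{u₀}(λ · T_{-r}(z)) where T_a(z) = (z+a)/(1+conj(a)z). Then f is analytic on 𝔻, maps 𝔻 into 𝔻, f(0) = 0, f(r) = s, and f'(r) = s/r + ((r² - s²)/(r(1 - r²)))·λ. -/
/-- The Möbius transformation `T_a(z) = (z+a)/(1 + conj a · z)`. -/
noncomputable def T (a z : ℂ) : ℂ := (z + a) / (1 + (starRingEnd ℂ) a * z)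

lemma T_denom_ne (a z : ℂ) (h : ‖a‖ * ‖z‖ < 1) :
    1 + (starRingEnd ℂ) a * z ≠ 0 := by
  intro hc
  have h1 : (starRingEnd ℂ) a * z = -1 := by linear_combination hc
  have : ‖(starRingEnd ℂ) a * z‖ = 1 := by rw [h1]; simp
  rw [norm_mul, Complex.norm_conj] at this
  linarith

lemma normSq_key (a z : ℂ) :
    Complex.normSq (1 + (starRingEnd ℂ) a * z) - Complex.normSq (z + a)
      = (1 - Complex.normSq a) * (1 - Complex.normSq z) := by
  simp only [Complex.normSq_apply, Complex.add_re, Complex.add_im, Complex.mul_re,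
    Complex.mul_im, Complex.conj_re, Complex.conj_im, Complex.one_re, Complex.one_im]
  ring

lemma abs_T_lt (a z : ℂ) (ha : ‖a‖ < 1) (hz : ‖z‖ < 1) :
    ‖T a z‖ < 1 := by
  have hmul : ‖a‖ * ‖z‖ < 1 := by
    nlinarith [norm_nonneg a, norm_nonneg z]
  have hden := T_denom_ne a z hmul
  have hdpos : 0 < ‖1 + (starRingEnd ℂ) a * z‖ :=
    norm_pos_iff.mpr hden
  rw [T, norm_div, div_lt_one hdpos]
  have hkey := normSq_key a z
  have h1 : Complex.normSq a < 1 := by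
    rw [← Complex.sq_norm]; nlinarith [norm_nonneg a]
  have h2 : Complex.normSq z < 1 := by
    rw [← Complex.sq_norm]; nlinarith [norm_nonneg z]
  have hsq : Complex.normSq (z + a) < Complex.normSq (1 + (starRingEnd ℂ) a * z) := by
    nlinarith
  rw [← Complex.sq_norm, ← Complex.sq_norm] at hsq
  exact lt_of_pow_lt_pow_left₀ 2 (norm_nonneg _) hsq

lemma hasDerivAt_T (a z : ℂ) (h : 1 + (starRingEnd ℂ) a * z ≠ 0) :
    HasDerivAt (T a) ((1 - (starRingEnd ℂ) a * a) / (1 + (starRingEnd ℂ) a * z) ^ 2) z := by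
  have h1 : HasDerivAt (fun w : ℂ => w + a) 1 z := (hasDerivAt_id z).add_const a
  have h2 : HasDerivAt (fun w : ℂ => 1 + (starRingEnd ℂ) a * w) ((starRingEnd ℂ) a) z := by
    simpa using ((hasDerivAt_id z).const_mul ((starRingEnd ℂ) a)).const_add 1
  have : HasDerivAt (fun w => (w + a) / (1 + (starRingEnd ℂ) a * w)) _ z := h1.div h2 h
  convert this using 1
  · rfl
  field_simp
  ring

lemma differentiableAt_T (a z : ℂ) (h : 1 + (starRingEnd ℂ) a * z ≠ 0) :
    DifferentiableAt ℂ (T a) z := (hasDerivAt_T a z h).differentiableAt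

/-- The extremal function `f(z) = z · T_{u₀}(λ · T_{-r}(z))` interpolates the data. -/
theorem extremal_case_one (r s : ℝ) (lam : ℂ)
    (hs : 0 ≤ s) (hsr : s < r) (hr : r < 1) (hlam : ‖lam‖ ≤ 1)
    (f : ℂ → ℂ)
    (hf : f = fun z => z * T ((s / r : ℝ) : ℂ) (lam * T (-(r : ℂ)) z)) :
    DifferentiableOn ℂ f (Metric.ball (0:ℂ) 1) ∧
    Set.MapsTo f (Metric.ball (0:ℂ) 1) (Metric.ball (0:ℂ) 1) ∧
    f 0 = 0 ∧ f (r : ℂ) = (s : ℂ) ∧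
    deriv f (r : ℂ) =
      (s / r : ℂ) + (((r ^ 2 - s ^ 2) / (r * (1 - r ^ 2)) : ℝ) : ℂ) * lam := by
  have hr0 : (0:ℝ) < r := lt_of_le_of_lt hs hsr
  have hrpos : (0:ℝ) < r := hr0
  have habs_r : ‖-(r:ℂ)‖ < 1 := by
    simpa [Complex.norm_real, Real.norm_eq_abs, abs_of_pos hr0] using hr
  have hu_lt : ‖((s / r : ℝ) : ℂ)‖ < 1 := by
    rw [Complex.norm_real, Real.norm_eq_abs, abs_of_nonneg (div_nonneg hs hr0.le)]
    rw [div_lt_one hr0]; exact hsr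
  -- inner value bound: for z in ball, |lam * T (-r) z| < 1
  have hinner_lt : ∀ z : ℂ, ‖z‖ < 1 → ‖lam * T (-(r:ℂ)) z‖ < 1 := by
    intro z hz
    have hT := abs_T_lt (-(r:ℂ)) z habs_r hz
    rw [norm_mul]
    nlinarith [norm_nonneg lam, norm_nonneg (T (-(r:ℂ)) z)]
  have hden1 : ∀ z : ℂ, ‖z‖ < 1 → 1 + (starRingEnd ℂ) (-(r:ℂ)) * z ≠ 0 := by
    intro z hz
    apply T_denom_ne
    nlinarith [norm_nonneg (-(r:ℂ)), norm_nonneg z]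
  have hden2 : ∀ w : ℂ, ‖w‖ < 1 →
      1 + (starRingEnd ℂ) ((s / r : ℝ) : ℂ) * w ≠ 0 := by
    intro w hw
    apply T_denom_ne
    nlinarith [norm_nonneg ((s / r : ℝ) : ℂ), norm_nonneg w]
  have hdiffAt : ∀ z : ℂ, ‖z‖ < 1 → DifferentiableAt ℂ f z := by
    intro z hz
    rw [hf]
    have d1 : DifferentiableAt ℂ (fun w => lam * T (-(r:ℂ)) w) z :=
      (differentiableAt_T _ _ (hden1 z hz)).const_mul lam
    have d2 : DifferentiableAt ℂ (T ((s / r : ℝ) : ℂ)) (lam * T (-(r:ℂ)) z) :=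
      differentiableAt_T _ _ (hden2 _ (hinner_lt z hz))
    exact (differentiableAt_id.mul (by have := d2.comp z d1; exact this))
  have hTrr : T (-(r:ℂ)) (r:ℂ) = 0 := by
    rw [T]
    simp
  have hrball : ∀ z : ℂ, z ∈ Metric.ball (0:ℂ) 1 ↔ ‖z‖ < 1 := by
    intro z; rw [Metric.mem_ball, dist_zero_right]
  refine ⟨?_, ?_, ?_, ?_, ?_⟩
  · intro z hz
    exact (hdiffAt z ((hrball z).mp hz)).differentiableWithinAt
  · intro z hz
    rw [hrball] at hz ⊢
    rw [hf]
    have hT := abs_T_lt ((s / r : ℝ) : ℂ) _ hu_lt (hinner_lt z hz)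
    simp only [norm_mul]
    nlinarith [norm_nonneg z, norm_nonneg (T ((s / r : ℝ) : ℂ) (lam * T (-(r:ℂ)) z))]
  · rw [hf]; simp
  · rw [hf]
    simp only [hTrr, mul_zero]
    rw [T]
    simp only [zero_add, mul_zero, add_zero, div_one]
    rw [← Complex.ofReal_mul]
    congr 1
    field_simp
  · -- derivative
    have habs_rr : ‖(r:ℂ)‖ < 1 := by
      rw [Complex.norm_real, Real.norm_eq_abs, abs_of_pos hr0]; exact hr
    have hd1 : HasDerivAt (T (-(r:ℂ)))
        ((1 - (starRingEnd ℂ) (-(r:ℂ)) * (-(r:ℂ))) / (1 + (starRingEnd ℂ) (-(r:ℂ)) * (r:ℂ)) ^ 2)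
        (r:ℂ) := hasDerivAt_T _ _ (hden1 _ habs_rr)
    have hd1' : HasDerivAt (fun z => lam * T (-(r:ℂ)) z)
        (lam * ((1 - (starRingEnd ℂ) (-(r:ℂ)) * (-(r:ℂ))) / (1 + (starRingEnd ℂ) (-(r:ℂ)) * (r:ℂ)) ^ 2))
        (r:ℂ) := hd1.const_mul lam
    have hval : lam * T (-(r:ℂ)) (r:ℂ) = 0 := by rw [hTrr, mul_zero]
    have hd2 : HasDerivAt (T ((s / r : ℝ) : ℂ))
        ((1 - (starRingEnd ℂ) ((s/r:ℝ):ℂ) * ((s/r:ℝ):ℂ)) / (1 + (starRingEnd ℂ) ((s/r:ℝ):ℂ) * (lam * T (-(r:ℂ)) (r:ℂ))) ^ 2)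
        (lam * T (-(r:ℂ)) (r:ℂ)) := by
      apply hasDerivAt_T
      apply hden2
      rw [hval]; simp
    have hcomp : HasDerivAt (fun z => T ((s/r:ℝ):ℂ) (lam * T (-(r:ℂ)) z))
        ((1 - (starRingEnd ℂ) ((s/r:ℝ):ℂ) * ((s/r:ℝ):ℂ)) / (1 + (starRingEnd ℂ) ((s/r:ℝ):ℂ) * (lam * T (-(r:ℂ)) (r:ℂ))) ^ 2
          * (lam * ((1 - (starRingEnd ℂ) (-(r:ℂ)) * (-(r:ℂ))) / (1 + (starRingEnd ℂ) (-(r:ℂ)) * (r:ℂ)) ^ 2)))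
        (r:ℂ) := by have := hd2.comp (r:ℂ) hd1'; exact this
    have hprod : HasDerivAt (fun z => z * T ((s/r:ℝ):ℂ) (lam * T (-(r:ℂ)) z)) _ (r:ℂ) := (hasDerivAt_id (r:ℂ)).mul hcomp
    rw [hf]
    have hder := hprod.deriv
    simp only [id_eq] at hder
    rw [hder]
    -- now pure algebra
    have hT0 : T ((s/r:ℝ):ℂ) (lam * T (-(r:ℂ)) (r:ℂ)) = ((s/r:ℝ):ℂ) := by
      rw [hval, T]; simp
    rw [hT0, hval]
    have hconj1 : (starRingEnd ℂ) (-(r:ℂ)) = -(r:ℂ) := by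
      rw [map_neg, Complex.conj_ofReal]
    have hconj2 : (starRingEnd ℂ) ((s/r:ℝ):ℂ) = ((s/r:ℝ):ℂ) := Complex.conj_ofReal _
    rw [hconj1, hconj2]
    have hrne : (r:ℂ) ≠ 0 := Complex.ofReal_ne_zero.mpr hr0.ne'
    have h1r2 : (1:ℂ) - (r:ℂ)^2 ≠ 0 := by
      have : ((1 - r^2 : ℝ) : ℂ) ≠ 0 := by
        rw [Complex.ofReal_ne_zero]; nlinarith
      push_cast at this
      convert this using 1
    have hA : (1:ℂ) + -(r:ℂ) * (r:ℂ) ≠ 0 := by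
      intro h; apply h1r2; linear_combination h
    simp only [mul_zero, add_zero, one_mul, mul_one, one_pow, div_one]
    have hB : (r:ℂ)^2 - (r:ℂ)^4*2 + (r:ℂ)^6 ≠ 0 := by
      have he : (r:ℂ)^2 - (r:ℂ)^4*2 + (r:ℂ)^6 = (r:ℂ)^2 * (1 - (r:ℂ)^2)^2 := by ring
      rw [he]; exact mul_ne_zero (pow_ne_zero 2 hrne) (pow_ne_zero 2 h1r2)
    have hC : (r:ℂ) * (r:ℂ) * (1 + -((r:ℂ) * (r:ℂ)))^2 ≠ 0 := by
      refine mul_ne_zero (mul_ne_zero hrne hrne) (pow_ne_zero 2 ?_)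
      intro h; apply h1r2; linear_combination h
    push_cast
    field_simp
    rw [show (1:ℂ) + -(r:ℂ)^2 = 1 - (r:ℂ)^2 by ring]
    field_simp
end

section
/- Let 0 ≤ s < r < 1, λ, μ ∈ 𝔻, u₀ = s/r, and let g(z) = T_{u₀}(T_{-r}(z)·T_{λ}(T_{-r}(z)·T_{μ}(α·T_{-r}(z)))) for some α ∈ closure(𝔻), where T_a(z) = (z+a)/(1+conj(a)z). Then g(r) = s/r and g'(r) = ((r² - s²)/(r²(1 - r²)))·λ. -/
lemma T_hasDerivAt (a w : ℂ) (h : 1 + (starRingEnd ℂ) a * w ≠ 0) :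
    HasDerivAt (T a) ((1 - (starRingEnd ℂ) a * a) / (1 + (starRingEnd ℂ) a * w) ^ 2) w := by
  have h1 : HasDerivAt (fun z : ℂ => z + a) 1 w := (hasDerivAt_id w).add_const a
  have h2 : HasDerivAt (fun z : ℂ => 1 + (starRingEnd ℂ) a * z) ((starRingEnd ℂ) a) w := by
    simpa using ((hasDerivAt_id w).const_mul ((starRingEnd ℂ) a)).const_add 1
  have := h1.div h2 h
  convert this using 1
  · rfl
  · rfl
  · rfl
  · ring

/-- First-derivative computation for the extremal function of the third order
Dieudonné Lemma. -/
theorem extremal_first_deriv (r s : ℝ) (lam mu alpha : ℂ)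
    (hs : 0 ≤ s) (hsr : s < r) (hr : r < 1)
    (hlam : ‖lam‖ < 1) (hmu : ‖mu‖ < 1)
    (halpha : ‖alpha‖ ≤ 1)
    (g : ℂ → ℂ)
    (hg : g = fun z =>
      T ((s / r : ℝ) : ℂ)
        (T (-(r : ℂ)) z * T lam (T (-(r : ℂ)) z * T mu (alpha * T (-(r : ℂ)) z)))) :
    g (r : ℂ) = (s / r : ℂ) ∧
    deriv g (r : ℂ) = (((r ^ 2 - s ^ 2) / (r ^ 2 * (1 - r ^ 2)) : ℝ) : ℂ) * lam := by
  have hr0 : (0:ℝ) < r := lt_of_le_of_lt hs hsr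
  have hrne : (r:ℂ) ≠ 0 := by exact_mod_cast hr0.ne'
  have h1r : (1:ℝ) - r ^ 2 ≠ 0 := by nlinarith
  have h1rC : (1:ℂ) - (r:ℂ) ^ 2 ≠ 0 := by
    intro h; apply h1r; exact_mod_cast h
  have hden : 1 + (starRingEnd ℂ) (-(r:ℂ)) * (r:ℂ) ≠ 0 := by
    have : (starRingEnd ℂ) (-(r:ℂ)) = -(r:ℂ) := by
      simp [Complex.conj_ofReal]
    rw [this]
    intro h; apply h1rC; rw [← h]; ring
  -- A := T (-r)
  have hA0 : T (-(r:ℂ)) (r:ℂ) = 0 := by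
    unfold T; simp
  have hA : HasDerivAt (T (-(r:ℂ)))
      ((1 - (starRingEnd ℂ) (-(r:ℂ)) * (-(r:ℂ))) / (1 + (starRingEnd ℂ) (-(r:ℂ)) * (r:ℂ)) ^ 2)
      (r:ℂ) := T_hasDerivAt _ _ hden
  set dA : ℂ := (1 - (starRingEnd ℂ) (-(r:ℂ)) * (-(r:ℂ))) / (1 + (starRingEnd ℂ) (-(r:ℂ)) * (r:ℂ)) ^ 2 with hdA
  -- E z := T mu (alpha * A z)
  have hAe : HasDerivAt (fun z => alpha * T (-(r:ℂ)) z) (alpha * dA) (r:ℂ) := hA.const_mul alpha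
  have hmuden : 1 + (starRingEnd ℂ) mu * (alpha * T (-(r:ℂ)) (r:ℂ)) ≠ 0 := by
    rw [hA0]; simp
  have hE : HasDerivAt (fun z => T mu (alpha * T (-(r:ℂ)) z))
      ((1 - (starRingEnd ℂ) mu * mu) / (1 + (starRingEnd ℂ) mu * (alpha * T (-(r:ℂ)) (r:ℂ))) ^ 2 * (alpha * dA))
      (r:ℂ) := by have := (T_hasDerivAt mu _ hmuden).comp (r:ℂ) hAe; exact this
  -- B z := A z * E z
  have hB := hA.mul hE
  have hB0 : T (-(r:ℂ)) (r:ℂ) * T mu (alpha * T (-(r:ℂ)) (r:ℂ)) = 0 := by rw [hA0]; ring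
  have hlamden : 1 + (starRingEnd ℂ) lam * (T (-(r:ℂ)) (r:ℂ) * T mu (alpha * T (-(r:ℂ)) (r:ℂ))) ≠ 0 := by
    rw [hB0]; simp
  -- C z := T lam (B z)
  have hC := (T_hasDerivAt lam _ hlamden).comp (r:ℂ) hB
  have hC0 : T lam (T (-(r:ℂ)) (r:ℂ) * T mu (alpha * T (-(r:ℂ)) (r:ℂ))) = lam := by
    rw [hB0]; unfold T; simp
  -- D z := A z * C z
  have hD := hA.mul hC
  have hD0 : T (-(r:ℂ)) (r:ℂ) * T lam (T (-(r:ℂ)) (r:ℂ) * T mu (alpha * T (-(r:ℂ)) (r:ℂ))) = 0 := by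
    rw [hA0]; ring
  have huden : 1 + (starRingEnd ℂ) ((s/r:ℝ):ℂ) *
      (T (-(r:ℂ)) (r:ℂ) * T lam (T (-(r:ℂ)) (r:ℂ) * T mu (alpha * T (-(r:ℂ)) (r:ℂ)))) ≠ 0 := by
    rw [hD0]; simp
  have hG0 := (T_hasDerivAt ((s/r:ℝ):ℂ) _ huden).comp (r:ℂ) hD
  have hG : HasDerivAt
      (fun z => T ((s / r : ℝ) : ℂ)
        (T (-(r : ℂ)) z * T lam (T (-(r : ℂ)) z * T mu (alpha * T (-(r : ℂ)) z))))
      _ (r:ℂ) := hG0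
  rw [hg]
  constructor
  · show T ((s / r : ℝ) : ℂ) _ = _
    rw [hD0]; unfold T; simp
  · have hderiv := hG.deriv
    rw [hderiv]
    simp only [Function.comp, Pi.mul_apply]
    rw [hD0, hC0, hA0]
    simp only [Complex.conj_ofReal, hdA, mul_zero, zero_mul, add_zero, mul_one]
    have hc : (starRingEnd ℂ) (-(r:ℂ)) = -(r:ℂ) := by simp [Complex.conj_ofReal]
    rw [hc]
    have hsr' : ((s:ℂ)/(r:ℂ)) = ((s/r:ℝ):ℂ) := by push_cast; ring
    push_cast
    have h1rC' : (1:ℂ) + (r:ℂ) ^ 2 * -1 ≠ 0 := by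
      intro h; apply h1rC; rw [← h]; ring
    have e1 : (1:ℂ) + -(r:ℂ) * (r:ℂ) = 1 - (r:ℂ) ^ 2 := by ring
    rw [e1, one_pow, div_one]
    field_simp
end

section
/- Let 0 ≤ s < r < 1, λ, μ ∈ 𝔻, u₀ = s/r, α ∈ closure(𝔻), and g(z) = T_{u₀}(T_{-r}(z)·T_{λ}(T_{-r}(z)·T_{μ}(α·T_{-r}(z)))). Then g''(r) = (2(r² - s²)/(r³(1 - r²)²))·(−sλ² + r²λ + rμ(1 − |λ|²)). -/
open Filter Topology

private lemma iteratedDeriv_two_congr {f h : ℂ → ℂ} {x : ℂ} (hfh : f =ᶠ[nhds x] h) :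
    iteratedDeriv 2 f x = iteratedDeriv 2 h x := by
  have h1 : deriv f =ᶠ[nhds x] deriv h := hfh.deriv
  have h2 := h1.deriv_eq
  rw [show (2:ℕ) = 1 + 1 from rfl, iteratedDeriv_succ, iteratedDeriv_one,
    iteratedDeriv_succ, iteratedDeriv_one]
  exact h2

private lemma second_deriv_div (P Q dP dQ : ℂ → ℂ) (x ddPx ddQx : ℂ)
    (hP : ∀ z, HasDerivAt P (dP z) z)
    (hQ : ∀ z, HasDerivAt Q (dQ z) z)
    (hdP : HasDerivAt dP ddPx x) (hdQ : HasDerivAt dQ ddQx x)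
    (hQx : Q x ≠ 0) :
    iteratedDeriv 2 (fun z => P z / Q z) x =
      ((ddPx * Q x - P x * ddQx) * Q x - (dP x * Q x - P x * dQ x) * (2 * dQ x)) / Q x ^ 3 := by
  have hQev : ∀ᶠ z in nhds x, Q z ≠ 0 := (hQ x).continuousAt.eventually_ne hQx
  have h1 : deriv (fun z => P z / Q z) =ᶠ[nhds x]
      fun z => (dP z * Q z - P z * dQ z) / Q z ^ 2 := by
    filter_upwards [hQev] with z hz
    exact ((hP z).div (hQ z) hz).deriv
  rw [show (2:ℕ) = 1 + 1 from rfl, iteratedDeriv_succ, iteratedDeriv_one, h1.deriv_eq]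
  have hnum : HasDerivAt (fun z => dP z * Q z - P z * dQ z)
      (ddPx * Q x + dP x * dQ x - (dP x * dQ x + P x * ddQx)) x :=
    (hdP.mul (hQ x)).sub ((hP x).mul hdQ)
  have hden := (hQ x).fun_pow 2
  rw [(hnum.fun_div hden (pow_ne_zero 2 hQx)).deriv]
  field_simp
  ring

set_option maxHeartbeats 3000000 in
/-- Second-derivative computation for the extremal function of the third order
Dieudonné Lemma. -/
theorem extremal_second_deriv (r s : ℝ) (lam mu alpha : ℂ)
    (hs : 0 ≤ s) (hsr : s < r) (hr : r < 1)
    (hlam : ‖lam‖ < 1) (hmu : ‖mu‖ < 1)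
    (halpha : ‖alpha‖ ≤ 1)
    (g : ℂ → ℂ)
    (hg : g = fun z =>
      T ((s / r : ℝ) : ℂ)
        (T (-(r : ℂ)) z * T lam (T (-(r : ℂ)) z * T mu (alpha * T (-(r : ℂ)) z)))) :
    iteratedDeriv 2 g (r : ℂ) =
      ((2 * (r ^ 2 - s ^ 2) / (r ^ 3 * (1 - r ^ 2) ^ 2) : ℝ) : ℂ) *
        (-(s : ℂ) * lam ^ 2 + (r : ℂ) ^ 2 * lam +
          (r : ℂ) * mu * ((1 - ‖lam‖ ^ 2 : ℝ) : ℂ)) := by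
  have hr0 : (0:ℝ) < r := lt_of_le_of_lt hs hsr
  have hrne : (r:ℂ) ≠ 0 := by exact_mod_cast hr0.ne'
  have h1rR : (1:ℝ) - r * r ≠ 0 := by nlinarith
  have h1r : (1:ℂ) - (r:ℂ) * (r:ℂ) ≠ 0 := by
    intro h; apply h1rR; exact_mod_cast congrArg Complex.re h
  set cL : ℂ := (starRingEnd ℂ) lam with hcL
  set cM : ℂ := (starRingEnd ℂ) mu with hcM
  set u : ℂ := ((s / r : ℝ) : ℂ) with hu
  have huval : u = (s:ℂ) / (r:ℂ) := by rw [hu]; push_cast; ring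
  set n3 : ℂ → ℂ := fun z => alpha * (z - (r:ℂ))^2 + mu * ((z - (r:ℂ)) * (1 - (r:ℂ)*z))
      + lam * (1 - (r:ℂ)*z)^2 + lam*cM*alpha * ((z - (r:ℂ)) * (1 - (r:ℂ)*z)) with hn3def
  set e3 : ℂ → ℂ := fun z => (1 - (r:ℂ)*z)^2 + cM*alpha * ((z - (r:ℂ)) * (1 - (r:ℂ)*z))
      + cL*alpha * (z - (r:ℂ))^2 + cL*mu * ((z - (r:ℂ)) * (1 - (r:ℂ)*z)) with he3def
  set P : ℂ → ℂ := fun z => (z - (r:ℂ)) * n3 z + u * ((1 - (r:ℂ)*z) * e3 z) with hPdef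
  set Q : ℂ → ℂ := fun z => (1 - (r:ℂ)*z) * e3 z + u * ((z - (r:ℂ)) * n3 z) with hQdef
  -- basic derivatives
  have hy : ∀ z : ℂ, HasDerivAt (fun w : ℂ => w - (r:ℂ)) 1 z := fun z =>
    (hasDerivAt_id z).sub_const _
  have hd : ∀ z : ℂ, HasDerivAt (fun w : ℂ => 1 - (r:ℂ)*w) (-(r:ℂ)) z := fun z => by
    simpa using ((hasDerivAt_id z).const_mul (r:ℂ)).const_sub 1
  have hy2 : ∀ z : ℂ, HasDerivAt (fun w : ℂ => (w - (r:ℂ))^2) (2*(z - (r:ℂ))) z := fun z => by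
    simpa using (hy z).fun_pow 2
  have hd2 : ∀ z : ℂ, HasDerivAt (fun w : ℂ => (1 - (r:ℂ)*w)^2) (2*(1 - (r:ℂ)*z)*(-(r:ℂ))) z :=
    fun z => by simpa using (hd z).fun_pow 2
  have hyd : ∀ z : ℂ, HasDerivAt (fun w : ℂ => (w - (r:ℂ)) * (1 - (r:ℂ)*w))
      (1 * (1 - (r:ℂ)*z) + (z - (r:ℂ)) * (-(r:ℂ))) z := fun z => (hy z).mul (hd z)
  set dn3 : ℂ → ℂ := fun z => alpha * (2*(z - (r:ℂ))) + mu * (1*(1 - (r:ℂ)*z) + (z - (r:ℂ))*(-(r:ℂ)))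
      + lam * (2*(1 - (r:ℂ)*z)*(-(r:ℂ))) + lam*cM*alpha * (1*(1 - (r:ℂ)*z) + (z - (r:ℂ))*(-(r:ℂ))) with hdn3def
  set de3 : ℂ → ℂ := fun z => (2*(1 - (r:ℂ)*z)*(-(r:ℂ))) + cM*alpha * (1*(1 - (r:ℂ)*z) + (z - (r:ℂ))*(-(r:ℂ)))
      + cL*alpha * (2*(z - (r:ℂ))) + cL*mu * (1*(1 - (r:ℂ)*z) + (z - (r:ℂ))*(-(r:ℂ))) with hde3def
  have hn3 : ∀ z : ℂ, HasDerivAt n3 (dn3 z) z := fun z =>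
    ((((hy2 z).const_mul alpha).add ((hyd z).const_mul mu)).add
      ((hd2 z).const_mul lam)).add ((hyd z).const_mul (lam*cM*alpha))
  have he3 : ∀ z : ℂ, HasDerivAt e3 (de3 z) z := fun z =>
    (((hd2 z).add ((hyd z).const_mul (cM*alpha))).add
      ((hy2 z).const_mul (cL*alpha))).add ((hyd z).const_mul (cL*mu))
  set dP : ℂ → ℂ := fun z => (1 * n3 z + (z - (r:ℂ)) * dn3 z)
      + u * ((-(r:ℂ)) * e3 z + (1 - (r:ℂ)*z) * de3 z) with hdPdef
  set dQ : ℂ → ℂ := fun z => ((-(r:ℂ)) * e3 z + (1 - (r:ℂ)*z) * de3 z)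
      + u * (1 * n3 z + (z - (r:ℂ)) * dn3 z) with hdQdef
  have hP : ∀ z : ℂ, HasDerivAt P (dP z) z := fun z =>
    ((hy z).mul (hn3 z)).add (((hd z).mul (he3 z)).const_mul u)
  have hQ : ∀ z : ℂ, HasDerivAt Q (dQ z) z := fun z =>
    ((hd z).mul (he3 z)).add (((hy z).mul (hn3 z)).const_mul u)
  -- second derivatives of dn3, de3 at r
  have hdn3' : ∀ z : ℂ, HasDerivAt dn3
      (alpha * (2*1) + mu * (1*(-(r:ℂ)) + 1*(-(r:ℂ))) + lam * (2*(-(r:ℂ))*(-(r:ℂ)))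
        + lam*cM*alpha * (1*(-(r:ℂ)) + 1*(-(r:ℂ)))) z := fun z => by
    refine (((((hy z).const_mul 2).const_mul alpha).add ?_).add ?_).add ?_
    · exact (((hd z).const_mul 1).add ((hy z).mul_const (-(r:ℂ)))).const_mul mu
    · exact (((hd z).const_mul 2).mul_const (-(r:ℂ))).const_mul lam
    · exact (((hd z).const_mul 1).add ((hy z).mul_const (-(r:ℂ)))).const_mul (lam*cM*alpha)
  have hde3' : ∀ z : ℂ, HasDerivAt de3
      ((2*(-(r:ℂ))*(-(r:ℂ))) + cM*alpha * (1*(-(r:ℂ)) + 1*(-(r:ℂ))) + cL*alpha * (2*1)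
        + cL*mu * (1*(-(r:ℂ)) + 1*(-(r:ℂ)))) z := fun z => by
    refine ((((((hd z).const_mul 2).mul_const (-(r:ℂ))).add ?_).add ?_).add ?_)
    · exact (((hd z).const_mul 1).add ((hy z).mul_const (-(r:ℂ)))).const_mul (cM*alpha)
    · exact (((hy z).const_mul 2).const_mul (cL*alpha))
    · exact (((hd z).const_mul 1).add ((hy z).mul_const (-(r:ℂ)))).const_mul (cL*mu)
  have hdP : HasDerivAt dP
      ((1 * dn3 (r:ℂ) + (1 * dn3 (r:ℂ) + ((r:ℂ) - (r:ℂ)) * (alpha * (2*1) + mu * (1*(-(r:ℂ)) + 1*(-(r:ℂ))) + lam * (2*(-(r:ℂ))*(-(r:ℂ))) + lam*cM*alpha * (1*(-(r:ℂ)) + 1*(-(r:ℂ))))))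
        + u * ((-(r:ℂ)) * de3 (r:ℂ) + ((-(r:ℂ)) * de3 (r:ℂ) + (1 - (r:ℂ)*(r:ℂ)) * ((2*(-(r:ℂ))*(-(r:ℂ))) + cM*alpha * (1*(-(r:ℂ)) + 1*(-(r:ℂ))) + cL*alpha * (2*1) + cL*mu * (1*(-(r:ℂ)) + 1*(-(r:ℂ))))))) (r:ℂ) := by
    exact ((((hn3 (r:ℂ)).const_mul 1).add ((hy (r:ℂ)).mul (hdn3' (r:ℂ)))).add
      ((((he3 (r:ℂ)).const_mul (-(r:ℂ))).add ((hd (r:ℂ)).mul (hde3' (r:ℂ)))).const_mul u))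
  have hdQ : HasDerivAt dQ
      (((-(r:ℂ)) * de3 (r:ℂ) + ((-(r:ℂ)) * de3 (r:ℂ) + (1 - (r:ℂ)*(r:ℂ)) * ((2*(-(r:ℂ))*(-(r:ℂ))) + cM*alpha * (1*(-(r:ℂ)) + 1*(-(r:ℂ))) + cL*alpha * (2*1) + cL*mu * (1*(-(r:ℂ)) + 1*(-(r:ℂ))))))
        + u * (1 * dn3 (r:ℂ) + (1 * dn3 (r:ℂ) + ((r:ℂ) - (r:ℂ)) * (alpha * (2*1) + mu * (1*(-(r:ℂ)) + 1*(-(r:ℂ))) + lam * (2*(-(r:ℂ))*(-(r:ℂ))) + lam*cM*alpha * (1*(-(r:ℂ)) + 1*(-(r:ℂ))))))) (r:ℂ) := by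
    exact ((((he3 (r:ℂ)).const_mul (-(r:ℂ))).add ((hd (r:ℂ)).mul (hde3' (r:ℂ)))).add
      ((((hn3 (r:ℂ)).const_mul 1).add ((hy (r:ℂ)).mul (hdn3' (r:ℂ)))).const_mul u))
  -- nonvanishing at r
  have he3r : e3 (r:ℂ) ≠ 0 := by
    rw [he3def]; simp only [sub_self, mul_zero, zero_mul, add_zero, mul_comm]
    simpa using pow_ne_zero 2 h1r
  have hQr : Q (r:ℂ) ≠ 0 := by
    rw [hQdef]; simp only [sub_self, mul_zero, zero_mul, add_zero]
    exact mul_ne_zero h1r he3r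
  -- local equality of g with P/Q
  have hEq : g =ᶠ[nhds (r:ℂ)] fun z => P z / Q z := by
    have c1 : ContinuousAt (fun z : ℂ => 1 - (r:ℂ)*z) (r:ℂ) := by fun_prop
    have c2 : ContinuousAt (fun z : ℂ => (1 - (r:ℂ)*z) + cM*alpha*(z - (r:ℂ))) (r:ℂ) := by fun_prop
    have ev1 : ∀ᶠ z in nhds (r:ℂ), 1 - (r:ℂ)*z ≠ 0 := c1.eventually_ne h1r
    have ev2 : ∀ᶠ z in nhds (r:ℂ), (1 - (r:ℂ)*z) + cM*alpha*(z - (r:ℂ)) ≠ 0 := by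
      refine c2.eventually_ne ?_
      simpa using h1r
    have ev3 : ∀ᶠ z in nhds (r:ℂ), e3 z ≠ 0 := (he3 (r:ℂ)).continuousAt.eventually_ne he3r
    have ev4 : ∀ᶠ z in nhds (r:ℂ), Q z ≠ 0 := (hQ (r:ℂ)).continuousAt.eventually_ne hQr
    filter_upwards [ev1, ev2, ev3, ev4] with z h1 h2 h3 h4
    have h1' : 1 - z * (r:ℂ) ≠ 0 := by rwa [mul_comm]
    have h2' : 1 - z * (r:ℂ) + (z - (r:ℂ)) * alpha * cM ≠ 0 := by convert h2 using 1; ring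
    rw [hg]
    simp only []
    rw [hu]
    simp only [T, map_neg, Complex.conj_ofReal, ← hcL, ← hcM]
    rw [← hu]
    have hw : (z + -(r:ℂ))/(1 + -(r:ℂ)*z) = (z - (r:ℂ))/(1 - (r:ℂ)*z) := by
      rw [← sub_eq_add_neg, neg_mul, ← sub_eq_add_neg]
    rw [hw]
    set w : ℂ := (z - (r:ℂ))/(1 - (r:ℂ)*z) with hwdef
    set E2 : ℂ := (1 - (r:ℂ)*z) + cM*alpha*(z - (r:ℂ)) with hE2def
    have hden2 : 1 + cM * (alpha * w) = E2 / (1 - (r:ℂ)*z) := by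
      rw [hwdef, hE2def]; field_simp
    have hT1 : w * ((alpha * w + mu) / (1 + cM * (alpha * w)))
        = ((z - (r:ℂ)) * (alpha*(z - (r:ℂ)) + mu*(1 - (r:ℂ)*z))) / ((1 - (r:ℂ)*z) * E2) := by
      rw [hden2, div_div_eq_mul_div, hwdef, hE2def]
      field_simp
      all_goals first | ring | (left; ring) | (right; ring)
    rw [hT1]
    set Nw : ℂ := (z - (r:ℂ)) * (alpha*(z - (r:ℂ)) + mu*(1 - (r:ℂ)*z)) with hNwdef
    set Dw : ℂ := (1 - (r:ℂ)*z) * E2 with hDwdef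
    have hDwne : Dw ≠ 0 := mul_ne_zero h1 h2
    have hden3 : 1 + cL * (Nw / Dw) = e3 z / Dw := by
      simp only [hNwdef, hDwdef, hE2def, he3def]
      field_simp
      all_goals first | ring | (left; ring) | (right; ring)
    have hT2 : w * ((Nw / Dw + lam) / (1 + cL * (Nw / Dw)))
        = ((z - (r:ℂ)) * n3 z) / ((1 - (r:ℂ)*z) * e3 z) := by
      rw [hden3, div_div_eq_mul_div, hwdef]
      simp only [hNwdef, hDwdef, hE2def, hn3def, he3def]
      field_simp
      ring
    rw [hT2]
    have hden4 : 1 + u * ((z - (r:ℂ)) * n3 z / ((1 - (r:ℂ)*z) * e3 z))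
        = Q z / ((1 - (r:ℂ)*z) * e3 z) := by
      simp only [hQdef]
      field_simp
      all_goals first | ring | (left; ring) | (right; ring)
    rw [hden4, div_div_eq_mul_div]
    rw [div_eq_div_iff h4 h4]
    simp only [hPdef]
    field_simp
    all_goals first | ring | (left; ring) | (right; ring)
  rw [iteratedDeriv_two_congr hEq,
    second_deriv_div P Q dP dQ (r:ℂ) _ _ hP hQ hdP hdQ hQr]
  have habs : ((1 - ‖lam‖ ^ 2 : ℝ) : ℂ) = 1 - lam * cL := by
    rw [hcL, Complex.sq_norm, Complex.ofReal_sub, Complex.ofReal_one, ← Complex.mul_conj]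
  rw [habs]
  have h1r' : (1:ℂ) - (r:ℂ)^2 ≠ 0 := by rwa [sq]
  have hdenR : ((r:ℂ)^3*(1-(r:ℂ)^2)^2 : ℂ) ≠ 0 :=
    mul_ne_zero (pow_ne_zero 3 hrne) (pow_ne_zero 2 h1r')
  push_cast
  rw [div_mul_eq_mul_div, div_eq_div_iff (pow_ne_zero 3 hQr) hdenR]
  simp only [hPdef, hQdef, hdPdef, hdQdef, hn3def, he3def, hdn3def, hde3def]
  have hsu : (s:ℂ) = (r:ℂ) * u := by rw [huval]; field_simp
  rw [hsu]
  ring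
end

section
/- Let g be analytic on 𝔻 with g(𝔻) ⊆ 𝔻, and z ∈ 𝔻. Define the Peschl invariant derivatives D₁g(z) = (1−|z|²)g'(z)/(1−|g(z)|²) and D₂g(z) = ((1−|z|²)²/(1−|g(z)|²))·[g''(z) − 2·conj(z)·g'(z)/(1−|z|²) + 2·conj(g(z))·g'(z)²/(1−|g(z)|²)]. Then |D₁g(z)| ≤ 1 and |D₂g(z)|/2 ≤ 1 − |D₁g(z)|². -/
open Complex Metric Set Filter Topology

private lemma one_sub_ne {x : ℂ} (h : ‖x‖ < 1) : (1 : ℂ) - x ≠ 0 := by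
  intro he
  have : x = 1 := by linear_combination -he
  rw [this] at h; simp at h

private lemma normSq_identity (a u : ℂ) :
    Complex.normSq (1 - (starRingEnd ℂ) a * u) - Complex.normSq (u - a)
      = (1 - Complex.normSq a) * (1 - Complex.normSq u) := by
  have : ((Complex.normSq (1 - (starRingEnd ℂ) a * u) - Complex.normSq (u - a) : ℝ) : ℂ)
      = (((1 - Complex.normSq a) * (1 - Complex.normSq u) : ℝ) : ℂ) := by
    push_cast
    rw [← Complex.mul_conj, ← Complex.mul_conj, ← Complex.mul_conj, ← Complex.mul_conj]
    simp only [map_sub, map_mul, map_one, Complex.conj_conj]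
    ring
  exact_mod_cast this

private lemma mobius_lt_one {a u : ℂ} (ha : ‖a‖ < 1) (hu : ‖u‖ < 1) :
    ‖(u - a) / (1 - (starRingEnd ℂ) a * u)‖ < 1 := by
  have hne : (1 : ℂ) - (starRingEnd ℂ) a * u ≠ 0 := by
    apply one_sub_ne
    rw [norm_mul, Complex.norm_conj]
    calc ‖a‖ * ‖u‖ ≤ 1 * ‖u‖ := by
          apply mul_le_mul_of_nonneg_right ha.le (norm_nonneg _)
      _ < 1 := by simpa using hu
  have hid := normSq_identity a u
  have h1 : 0 < 1 - Complex.normSq a := by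
    rw [Complex.normSq_eq_norm_sq]; nlinarith [norm_nonneg a]
  have h2 : 0 < 1 - Complex.normSq u := by
    rw [Complex.normSq_eq_norm_sq]; nlinarith [norm_nonneg u]
  have hlt : Complex.normSq (u - a) < Complex.normSq (1 - (starRingEnd ℂ) a * u) := by nlinarith
  rw [norm_div, div_lt_one]
  · rw [← Real.sqrt_lt_sqrt_iff (Complex.normSq_nonneg _)] at hlt
    simpa [Complex.norm_def] using hlt
  · have := norm_pos_iff.mpr hne; linarith

private lemma abs_one_sub_conj_mul_self {a : ℂ} (ha : ‖a‖ < 1) :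
    (1 : ℂ) - (starRingEnd ℂ) a * a = ((1 - ‖a‖ ^ 2 : ℝ) : ℂ) := by
  rw [mul_comm, Complex.mul_conj, Complex.normSq_eq_norm_sq]; push_cast; ring

private lemma schwarz_pick_center {f : ℂ → ℂ}
    (hd : DifferentiableOn ℂ f (ball 0 1))
    (hm : MapsTo f (ball 0 1) (ball 0 1)) :
    ‖deriv f 0‖ ≤ 1 - ‖f 0‖ ^ 2 := by
  have h0 : (0 : ℂ) ∈ ball (0 : ℂ) 1 := by simp
  have hfu : ∀ u ∈ ball (0:ℂ) 1, ‖f u‖ < 1 := fun u hu => by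
    exact mem_ball_zero_iff.mp (hm hu)
  have ha : ‖f 0‖ < 1 := hfu 0 h0
  set a := f 0 with ha_def
  set c := (starRingEnd ℂ) a with hc
  set F : ℂ → ℂ := fun u => (f u - a) / (1 - c * f u) with hF
  have hden : ∀ u ∈ ball (0:ℂ) 1, (1 : ℂ) - c * f u ≠ 0 := fun u hu => by
    apply one_sub_ne
    rw [hc, norm_mul, Complex.norm_conj]
    nlinarith [norm_nonneg a, norm_nonneg (f u), hfu u hu]
  have hFd : DifferentiableOn ℂ F (ball 0 1) := by
    apply DifferentiableOn.div
    · exact hd.sub (differentiableOn_const _)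
    · exact (differentiableOn_const _).sub ((differentiableOn_const _).mul hd)
    · exact hden
  have hFm : MapsTo F (ball 0 1) (ball 0 1) := fun u hu => by
    rw [mem_ball_zero_iff]
    show ‖(f u - a) / (1 - c * f u)‖ < 1
    exact mobius_lt_one ha (hfu u hu)
  have hF0 : F 0 = 0 := by simp [hF, ha_def]
  have hs := Complex.norm_deriv_le_one_of_mapsTo_ball hFd (by rw [hF0]; exact hFm.mono_right ball_subset_closedBall) one_pos
  have hfd : HasDerivAt f (deriv f 0) 0 :=
    (hd.differentiableAt (isOpen_ball.mem_nhds h0)).hasDerivAt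
  set d := deriv f 0 with hd_def
  have hB : (1 : ℂ) - c * a = ((1 - ‖a‖ ^ 2 : ℝ) : ℂ) := abs_one_sub_conj_mul_self ha
  have hBne : ((1 - ‖a‖ ^ 2 : ℝ) : ℂ) ≠ 0 := by
    rw [Complex.ofReal_ne_zero]; nlinarith [norm_nonneg a]
  have hFder : HasDerivAt F (d / ((1 - ‖a‖ ^ 2 : ℝ) : ℂ)) 0 := by
    have hnum : HasDerivAt (fun u => f u - a) d 0 := hfd.sub_const a
    have hden2 : HasDerivAt (fun u => (1:ℂ) - c * f u) (-(c * d)) 0 :=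
      ((hfd.const_mul c).const_sub 1)
    have h2 := hnum.div hden2 (hden 0 h0)
    have h00 : f 0 = a := rfl
    rw [h00, hB] at h2
    convert h2 using 1
    case e'_4 => rfl
    case e'_5 => rfl
    case e'_8 => rfl
    have hsq : (((1 - ‖a‖ ^ 2 : ℝ) : ℂ))^2
        = ((1 - ‖a‖ ^ 2 : ℝ) : ℂ) * ((1 - ‖a‖ ^ 2 : ℝ) : ℂ) := sq _
    rw [sub_self, zero_mul, sub_zero, hsq, ← div_div, mul_div_assoc, div_self hBne, mul_one]
  rw [hFder.deriv] at hs
  rw [norm_div, Complex.norm_real, Real.norm_eq_abs, abs_of_pos (by nlinarith [norm_nonneg a]),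
    div_le_one (by nlinarith [norm_nonneg a])] at hs
  exact hs

private lemma schur_bound {H : ℂ → ℂ}
    (hd : DifferentiableOn ℂ H (ball 0 1))
    (hm : MapsTo H (ball 0 1) (ball 0 1)) (h0 : H 0 = 0) :
    ‖deriv H 0‖ ≤ 1 ∧
      ‖deriv (deriv H) 0‖ / 2 ≤ 1 - ‖deriv H 0‖ ^ 2 := by
  have h0m : (0 : ℂ) ∈ ball (0 : ℂ) 1 := by simp
  have hnb : ball (0:ℂ) 1 ∈ 𝓝 (0:ℂ) := isOpen_ball.mem_nhds h0m
  have hm0 : MapsTo H (ball 0 1) (ball (H 0) 1) := by rw [h0]; exact hm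
  refine ⟨Complex.norm_deriv_le_one_of_mapsTo_ball hd (by rw [h0]; exact hm.mono_right ball_subset_closedBall) one_pos, ?_⟩
  set φ := dslope H 0 with hφdef
  have hφd : DifferentiableOn ℂ φ (ball 0 1) := (Complex.differentiableOn_dslope hnb).mpr hd
  have hφb : ∀ u ∈ ball (0:ℂ) 1, ‖φ u‖ ≤ 1 := fun u hu => by
    have := Complex.norm_dslope_le_div_of_mapsTo_ball hd (hm0.mono_right ball_subset_closedBall) hu
    simpa using this
  obtain ⟨p, hp⟩ := hd.analyticAt hnb
  have hφ0 : φ 0 = deriv H 0 := dslope_same H 0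
  have hderφ : deriv φ 0 = p.coeff 2 := by
    have h := hp.has_fpower_series_dslope_fslope.deriv
    rw [← hφdef] at h
    rw [h]
    exact p.coeff_fslope
  obtain ⟨r, hpr⟩ := hp
  have hDD : deriv (deriv H) 0 = 2 * p.coeff 2 := by
    have h2 := hpr.factorial_smul (1:ℂ) 2
    rw [← iteratedDeriv_eq_iteratedFDeriv, iteratedDeriv_succ, iteratedDeriv_one] at h2
    rw [← h2]
    rw [nsmul_eq_mul, FormalMultilinearSeries.coeff]
    norm_num
  set U := ‖p.coeff 2‖ with hU
  set V := ‖deriv H 0‖ ^ 2 with hV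
  have key : ∀ t ∈ Ioo (0:ℝ) 1, t * U ≤ 1 - t^2 * V := by
    intro t ht
    set ψ : ℂ → ℂ := fun u => (t:ℂ) * φ u with hψ
    have hψd : DifferentiableOn ℂ ψ (ball 0 1) := (differentiableOn_const _).mul hφd
    have hψm : MapsTo ψ (ball 0 1) (ball 0 1) := fun u hu => by
      rw [mem_ball_zero_iff, hψ]
      show ‖(t:ℂ) * φ u‖ < 1
      rw [norm_mul, Complex.norm_real, Real.norm_eq_abs, abs_of_pos ht.1]
      nlinarith [hφb u hu, ht.1, ht.2, norm_nonneg (φ u)]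
    have hsp := schwarz_pick_center hψd hψm
    have hψ0 : ψ 0 = (t:ℂ) * φ 0 := rfl
    have hψder : deriv ψ 0 = (t:ℂ) * deriv φ 0 :=
      deriv_const_mul _ (hφd.differentiableAt hnb)
    rw [hψder, hψ0, norm_mul, norm_mul, Complex.norm_real, Real.norm_eq_abs, abs_of_pos ht.1] at hsp
    rw [hφ0] at hsp
    rw [hderφ] at hsp
    calc t * U ≤ 1 - (t * ‖deriv H 0‖)^2 := by rw [hU]; nlinarith [hsp]
      _ = 1 - t^2 * V := by rw [hV]; ring
  have hUV : U ≤ 1 - V := by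
    have hcont : ContinuousAt (fun t : ℝ => 1 - t^2 * V - t * U) 1 := by fun_prop
    have htend : Tendsto (fun t : ℝ => 1 - t^2 * V - t * U) (𝓝[Ioo (0:ℝ) 1] 1)
        (𝓝 (1 - V - U)) := by
      have := tendsto_nhdsWithin_of_tendsto_nhds (s := Ioo (0:ℝ) 1) hcont.tendsto
      convert this using 2
      norm_num
    have hne : (𝓝[Ioo (0:ℝ) 1] (1:ℝ)).NeBot := by
      rw [← mem_closure_iff_nhdsWithin_neBot, closure_Ioo (by norm_num : (0:ℝ) ≠ 1)]
      exact ⟨zero_le_one, le_refl 1⟩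
    have h0le : (0:ℝ) ≤ 1 - V - U := by
      refine ge_of_tendsto htend ?_
      filter_upwards [eventually_mem_nhdsWithin] with t ht
      have := key t ht
      linarith
    linarith
  rw [hDD, norm_mul]
  simp only [Complex.norm_two]
  linarith

/-- Bounds on the first two Peschl invariant derivatives of a holomorphic
self-map of the disk. -/
theorem peschl_bounds (g : ℂ → ℂ) (z : ℂ)
    (hg : DifferentiableOn ℂ g (Metric.ball (0:ℂ) 1))
    (hmap : Set.MapsTo g (Metric.ball (0:ℂ) 1) (Metric.ball (0:ℂ) 1))
    (hz : z ∈ Metric.ball (0:ℂ) 1)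
    (D1 D2 : ℂ)
    (hD1 : D1 = ((1 - ‖z‖ ^ 2 : ℝ) : ℂ) * deriv g z /
      ((1 - ‖g z‖ ^ 2 : ℝ) : ℂ))
    (hD2 : D2 = (((1 - ‖z‖ ^ 2) ^ 2 : ℝ) : ℂ) /
        ((1 - ‖g z‖ ^ 2 : ℝ) : ℂ) *
      (iteratedDeriv 2 g z
        - 2 * (starRingEnd ℂ) z * deriv g z / ((1 - ‖z‖ ^ 2 : ℝ) : ℂ)
        + 2 * (starRingEnd ℂ) (g z) * (deriv g z) ^ 2 /
            ((1 - ‖g z‖ ^ 2 : ℝ) : ℂ))) :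
    ‖D1‖ ≤ 1 ∧ ‖D2‖ / 2 ≤ 1 - ‖D1‖ ^ 2 := by
  have h0m : (0:ℂ) ∈ ball (0:ℂ) 1 := by simp
  have hnb : ball (0:ℂ) 1 ∈ 𝓝 (0:ℂ) := isOpen_ball.mem_nhds h0m
  have hzb : ‖z‖ < 1 := by
    exact mem_ball_zero_iff.mp hz
  set w := g z with hw_def
  have hwm : w ∈ ball (0:ℂ) 1 := hmap hz
  have hwb : ‖w‖ < 1 := by
    exact mem_ball_zero_iff.mp hwm
  set b := (starRingEnd ℂ) z with hb
  set c := (starRingEnd ℂ) w with hc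
  set A : ℂ := ((1 - ‖z‖ ^ 2 : ℝ) : ℂ) with hA_def
  set B : ℂ := ((1 - ‖w‖ ^ 2 : ℝ) : ℂ) with hB_def
  have hA : (1:ℂ) - b * z = A := by
    rw [hA_def, hb, mul_comm, Complex.mul_conj, Complex.normSq_eq_norm_sq]; push_cast; ring
  have hB : (1:ℂ) - c * w = B := by
    rw [hB_def, hc, mul_comm, Complex.mul_conj, Complex.normSq_eq_norm_sq]; push_cast; ring
  have hAne : A ≠ 0 := by
    rw [hA_def, Complex.ofReal_ne_zero]; nlinarith [norm_nonneg z]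
  have hBne : B ≠ 0 := by
    rw [hB_def, Complex.ofReal_ne_zero]; nlinarith [norm_nonneg w]
  set σ : ℂ → ℂ := fun ζ => (ζ + z) / (1 + b * ζ) with hσ
  have habs : ∀ ζ ∈ ball (0:ℂ) 1, ‖ζ‖ < 1 := fun ζ hζ => by
    exact mem_ball_zero_iff.mp hζ
  have hσden : ∀ ζ ∈ ball (0:ℂ) 1, (1:ℂ) + b * ζ ≠ 0 := fun ζ hζ => by
    have h := one_sub_ne (x := -(b * ζ)) (by
      rw [norm_neg, norm_mul, hb, Complex.norm_conj]
      nlinarith [norm_nonneg z, norm_nonneg ζ, habs ζ hζ])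
    rw [sub_neg_eq_add] at h
    exact h
  have hσm : MapsTo σ (ball 0 1) (ball 0 1) := fun ζ hζ => by
    have h1 : ‖-z‖ < 1 := by simpa using hzb
    have h := mobius_lt_one h1 (habs ζ hζ)
    rw [sub_neg_eq_add, map_neg, neg_mul, sub_neg_eq_add] at h
    rw [mem_ball_zero_iff]
    show ‖(ζ + z) / (1 + b * ζ)‖ < 1
    rw [hb]
    exact h
  have hσd : DifferentiableOn ℂ σ (ball 0 1) := by
    apply DifferentiableOn.div
    · exact (differentiable_id.add_const z).differentiableOn
    · exact ((differentiable_id.const_mul b).const_add 1).differentiableOn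
    · exact hσden
  have hσ0 : σ 0 = z := by simp [hσ]
  have hσder : ∀ ζ ∈ ball (0:ℂ) 1, HasDerivAt σ (A / (1 + b * ζ)^2) ζ := fun ζ hζ => by
    have h1 : HasDerivAt (fun ζ : ℂ => ζ + z) 1 ζ := (hasDerivAt_id ζ).add_const z
    have h2 : HasDerivAt (fun ζ : ℂ => (1:ℂ) + b * ζ) b ζ := by
      simpa using ((hasDerivAt_id ζ).const_mul b).const_add 1
    have h3 := h1.div h2 (hσden ζ hζ)
    convert h3 using 1
    case e'_4 => rfl
    case e'_5 => rfl
    case e'_8 => rfl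
    rw [← hA]
    congr 1
    ring
  set G : ℂ → ℂ := fun ζ => g (σ ζ) with hG
  have hGm : MapsTo G (ball 0 1) (ball 0 1) := fun ζ hζ => hmap (hσm hζ)
  have hGb : ∀ ζ ∈ ball (0:ℂ) 1, ‖G ζ‖ < 1 := fun ζ hζ => habs _ (hGm hζ)
  have hGd : DifferentiableOn ℂ G (ball 0 1) := hg.comp hσd hσm
  have hG0 : G 0 = w := by rw [hG]; simp only [hσ0, ← hw_def]
  have hHden : ∀ ζ ∈ ball (0:ℂ) 1, (1:ℂ) - c * G ζ ≠ 0 := fun ζ hζ => by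
    apply one_sub_ne
    rw [hc, norm_mul, Complex.norm_conj]
    nlinarith [norm_nonneg w, norm_nonneg (G ζ), hGb ζ hζ]
  set H : ℂ → ℂ := fun ζ => (G ζ - w) / (1 - c * G ζ) with hH
  have hHd : DifferentiableOn ℂ H (ball 0 1) := by
    apply DifferentiableOn.div
    · exact hGd.sub (differentiableOn_const _)
    · exact (differentiableOn_const _).sub ((differentiableOn_const _).mul hGd)
    · exact hHden
  have hHm : MapsTo H (ball 0 1) (ball 0 1) := fun ζ hζ => by
    rw [mem_ball_zero_iff]
    show ‖(G ζ - w) / (1 - c * G ζ)‖ < 1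
    rw [hc]
    exact mobius_lt_one hwb (hGb ζ hζ)
  have hH0 : H 0 = 0 := by
    rw [hH]; simp only [hG0, sub_self, zero_div]
  have hgd : ∀ ζ ∈ ball (0:ℂ) 1, HasDerivAt g (deriv g (σ ζ)) (σ ζ) := fun ζ hζ =>
    (hg.differentiableAt (isOpen_ball.mem_nhds (hσm hζ))).hasDerivAt
  have hGder : ∀ ζ ∈ ball (0:ℂ) 1,
      HasDerivAt G (deriv g (σ ζ) * (A / (1 + b * ζ)^2)) ζ := fun ζ hζ => by
    have h := (hgd ζ hζ).comp ζ (hσder ζ hζ)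
    simpa [hG, Function.comp_def] using h
  set F : ℂ → ℂ := fun ζ => B * A * deriv g (σ ζ) / ((1 - c * G ζ)^2 * (1 + b * ζ)^2) with hF
  have hHder : ∀ ζ ∈ ball (0:ℂ) 1, HasDerivAt H (F ζ) ζ := fun ζ hζ => by
    have hnum : HasDerivAt (fun ζ => G ζ - w) (deriv g (σ ζ) * (A / (1 + b * ζ)^2)) ζ :=
      (hGder ζ hζ).sub_const w
    have hden2 : HasDerivAt (fun ζ => (1:ℂ) - c * G ζ)
        (-(c * (deriv g (σ ζ) * (A / (1 + b * ζ)^2)))) ζ :=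
      ((hGder ζ hζ).const_mul c).const_sub 1
    have h3 := hnum.div hden2 (hHden ζ hζ)
    convert h3 using 1
    case e'_4 => rfl
    case e'_5 => rfl
    case e'_8 => rfl
    rw [hF, ← hB]
    have e1 : (1:ℂ) + b * ζ ≠ 0 := hσden ζ hζ
    have e2 : (1:ℂ) - c * G ζ ≠ 0 := hHden ζ hζ
    field_simp
    ring
  have hderivH0 : deriv H 0 = F 0 := (hHder 0 h0m).deriv
  have hF0 : F 0 = A * deriv g z / B := by
    rw [hF]
    simp only [hσ0, hG0, mul_zero, add_zero, hB]
    field_simp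
  have hD1H : D1 = deriv H 0 := by
    rw [hD1, hderivH0, hF0]
  -- second derivative computation
  have hg' : AnalyticOnNhd ℂ g (ball 0 1) := hg.analyticOnNhd isOpen_ball
  have hdgz : HasDerivAt (deriv g) (deriv (deriv g) z) z :=
    ((hg'.deriv z hz).differentiableAt).hasDerivAt
  have hσ0d : HasDerivAt σ A 0 := by simpa using hσder 0 h0m
  have hdgσ : HasDerivAt (fun ζ => deriv g (σ ζ)) (deriv (deriv g) z * A) 0 := by
    have h2 : HasDerivAt (deriv g) (deriv (deriv g) z) (σ 0) := by rw [hσ0]; exact hdgz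
    simpa [Function.comp_def] using h2.comp 0 hσ0d
  have hG0d : HasDerivAt G (deriv g z * A) 0 := by
    have := hGder 0 h0m
    rw [hσ0] at this
    simpa using this
  have hinner : HasDerivAt (fun ζ => (1:ℂ) - c * G ζ) (-(c * (deriv g z * A))) 0 :=
    (hG0d.const_mul c).const_sub 1
  have hnumF : HasDerivAt (fun ζ => B * A * deriv g (σ ζ)) (B * A * (deriv (deriv g) z * A)) 0 := by
    simpa [mul_assoc] using hdgσ.const_mul (B * A)
  have hP0ne : ((1:ℂ) - c * G 0)^2 * ((1:ℂ) + b * 0)^2 ≠ 0 := by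
    apply mul_ne_zero
    · exact pow_ne_zero 2 (hHden 0 h0m)
    · exact pow_ne_zero 2 (hσden 0 h0m)
  have hFder0 : HasDerivAt F
      (A * (A * B * deriv (deriv g) z - 2 * b * B * deriv g z + 2 * c * A * (deriv g z)^2) / B^2)
      0 := by
    have hden1' := hinner.pow 2
    have hden2' := (((hasDerivAt_id (0:ℂ)).const_mul b).const_add 1).pow 2
    have h := hnumF.div (hden1'.mul hden2') hP0ne
    convert h using 1
    case e'_4 => rfl
    case e'_5 => rfl
    case e'_8 => rfl
    simp only [hG0, hσ0, mul_zero, add_zero, hB, id_eq, mul_one, one_pow, pow_one,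
      Nat.cast_ofNat, sub_zero, Pi.mul_apply, Pi.pow_apply]
    push_cast
    field_simp
    ring
  have hdd : deriv (deriv H) 0
      = A * (A * B * deriv (deriv g) z - 2 * b * B * deriv g z + 2 * c * (deriv g z)^2 * A) / B^2 := by
    have hHF : deriv H =ᶠ[𝓝 (0:ℂ)] F :=
      Filter.eventually_of_mem hnb (fun ζ hζ => (hHder ζ hζ).deriv)
    rw [hHF.deriv_eq, hFder0.deriv]
    ring
  have hit2 : iteratedDeriv 2 g z = deriv (deriv g) z := by
    rw [iteratedDeriv_succ, iteratedDeriv_one]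
  have hD2H : D2 = deriv (deriv H) 0 := by
    rw [hD2, hdd, hit2]
    have hsq : (((1 - ‖z‖ ^ 2) ^ 2 : ℝ) : ℂ) = A^2 := by
      rw [hA_def]; push_cast; ring
    rw [hsq]
    field_simp
  obtain ⟨h1, h2⟩ := schur_bound hHd hHm hH0
  rw [hD1H, hD2H]
  exact ⟨h1, h2⟩
end
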